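/- Let A be a bounded selfadjoint operator on a complex Hilbert space H and let x ∈ H. Then the sequence (A^k x)_{k∈ℕ} is a Bessel sequence in H if and only if there exists C > 0 such that |⟨A^k x, x⟩| ≤ C/k for all integers k ≥ 1. -/

import Mathlib

open MeasureTheory

section HilbertIneq
open Finset Real

lemma sum_inv_sqrt_le (N : ℕ) : ∑ m ∈ range N, 1 / Real.sqrt (m + 1) ≤ 2 * Real.sqrt N := by
  induction N with
  | zero => simp
  | succ N ih =>
    rw [Finset.sum_range_succ]
    have h1 : (0:ℝ) < Real.sqrt (N + 1) := Real.sqrt_pos.2 (by positivity)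
    have h0 : (0:ℝ) ≤ Real.sqrt N := Real.sqrt_nonneg _
    have hs : Real.sqrt N ^ 2 = (N:ℝ) := Real.sq_sqrt (by positivity)
    have hs1 : Real.sqrt ((N:ℝ)+1) ^ 2 = (N:ℝ)+1 := Real.sq_sqrt (by positivity)
    have : 1 / Real.sqrt (↑N + 1) ≤ 2 * Real.sqrt ((N:ℝ)+1) - 2 * Real.sqrt N := by
      rw [div_le_iff₀ h1]
      nlinarith [sq_nonneg (Real.sqrt ((N:ℝ)+1) - Real.sqrt N)]
    push_cast
    push_cast at ih
    linarith

/-- Telescoping: ∑_{m∈Ico a b} 1/((m+1)√(m+1)) ≤ 2/√a  (for 1 ≤ a). -/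
lemma sum_pow32_le (a b : ℕ) (ha : 1 ≤ a) :
    ∑ m ∈ Finset.Ico a b, 1 / (((m:ℝ) + 1) * Real.sqrt (m + 1)) ≤ 2 / Real.sqrt a := by
  have key : ∀ b, a ≤ b → ∑ m ∈ Finset.Ico a b, 1 / (((m:ℝ) + 1) * Real.sqrt (m + 1))
      ≤ 2 / Real.sqrt a - 2 / Real.sqrt b := by
    intro b hb
    induction b with
    | zero => omega
    | succ b ih =>
      rcases Nat.lt_or_ge a (b+1) with h | h
      · have hab : a ≤ b := by omega
        rw [Finset.sum_Ico_succ_top hab]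
        have ihb := ih hab
        have h1b : (1:ℕ) ≤ b := le_trans ha hab
        have hb0 : (0:ℝ) < Real.sqrt b := Real.sqrt_pos.2 (by positivity)
        have hb1 : (0:ℝ) < Real.sqrt ((b:ℝ)+1) := Real.sqrt_pos.2 (by positivity)
        have hsb : Real.sqrt (b:ℝ) ^ 2 = (b:ℝ) := Real.sq_sqrt (by positivity)
        have hsb1 : Real.sqrt ((b:ℝ)+1) ^ 2 = (b:ℝ)+1 := Real.sq_sqrt (by positivity)
        have step : 1 / (((b:ℝ) + 1) * Real.sqrt ((b:ℝ) + 1))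
            ≤ 2 / Real.sqrt b - 2 / Real.sqrt ((b:ℝ)+1) := by
          rw [div_sub_div _ _ (ne_of_gt hb0) (ne_of_gt hb1), div_le_div_iff₀ (by positivity) (by positivity)]
          have hmono : Real.sqrt (b:ℝ) ≤ Real.sqrt ((b:ℝ)+1) := Real.sqrt_le_sqrt (by linarith)
          nlinarith [sq_nonneg (Real.sqrt ((b:ℝ)+1) - Real.sqrt b), mul_pos hb0 hb1]
        push_cast
        push_cast at ihb step
        linarith
      · have : a = b + 1 := by omega
        subst this
        simp
  rcases Nat.lt_or_ge b a with h | h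
  · rw [Finset.Ico_eq_empty (by omega)]
    simp
    positivity
  · have := key b h
    have : (0:ℝ) ≤ 2 / Real.sqrt b := by positivity
    linarith [key b h]

/-- Row sums of the Hilbert-type kernel are bounded by 4 (Schur test weights). -/
lemma row_sum_le (n : ℕ) (F : Finset ℕ) :
    ∑ m ∈ F, Real.sqrt (n+1) / (Real.sqrt (m+1) * ((n:ℝ)+(m:ℝ)+1)) ≤ 4 := by
  obtain ⟨N, hFN⟩ := F.exists_nat_subset_range
  set r : ℕ → ℝ := fun m => Real.sqrt (n+1) / (Real.sqrt (m+1) * ((n:ℝ)+(m:ℝ)+1)) with hr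
  set p : ℕ → ℝ := fun m => if m ≤ n then 1/(Real.sqrt (n+1) * Real.sqrt (m+1)) else 0 with hp
  set q : ℕ → ℝ := fun m => if n < m then Real.sqrt (n+1) / (((m:ℝ)+1) * Real.sqrt (m+1)) else 0 with hq
  have hbound : ∀ m, r m ≤ p m + q m := by
    intro m
    have hsn : Real.sqrt ((n:ℝ)+1) ^ 2 = (n:ℝ)+1 := Real.sq_sqrt (by positivity)
    have hsm : Real.sqrt ((m:ℝ)+1) ^ 2 = (m:ℝ)+1 := Real.sq_sqrt (by positivity)
    have hsn0 : (0:ℝ) < Real.sqrt ((n:ℝ)+1) := Real.sqrt_pos.2 (by positivity)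
    have hsm0 : (0:ℝ) < Real.sqrt ((m:ℝ)+1) := Real.sqrt_pos.2 (by positivity)
    rcases le_or_gt m n with h | h
    · have : q m = 0 := by simp [hq, not_lt.2 h]
      rw [this, add_zero]
      simp only [hp, if_pos h]
      rw [hr]
      simp only
      rw [div_le_div_iff₀ (by positivity) (by positivity)]
      have hcast : (m:ℝ) ≤ (n:ℝ) := by exact_mod_cast h
      nlinarith [mul_pos hsn0 hsm0]
    · have : p m = 0 := by simp [hp, not_le.2 h]
      rw [this, zero_add]
      simp only [hq, if_pos h]
      rw [hr]
      simp only
      rw [div_le_div_iff₀ (by positivity) (by positivity)]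
      have hcast : (n:ℝ) ≤ (m:ℝ) := by exact_mod_cast h.le
      nlinarith [hsn0.le, hsm0.le, mul_pos hsm0 hsn0]
  have hps : ∑ m ∈ F, p m ≤ 2 := by
    have h1 : ∑ m ∈ F, p m = ∑ m ∈ F.filter (· ≤ n), 1/(Real.sqrt (n+1) * Real.sqrt (m+1)) := by
      rw [Finset.sum_filter]
    rw [h1]
    have hsub : F.filter (· ≤ n) ⊆ Finset.range (n+1) := by
      intro m hm
      simp only [Finset.mem_filter] at hm
      exact Finset.mem_range.2 (by omega)
    have h2 : ∑ m ∈ F.filter (· ≤ n), 1/(Real.sqrt (n+1) * Real.sqrt (m+1))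
        ≤ ∑ m ∈ Finset.range (n+1), 1/(Real.sqrt (n+1) * Real.sqrt (m+1)) :=
      Finset.sum_le_sum_of_subset_of_nonneg hsub (fun m _ _ => by positivity)
    have hsn0 : (0:ℝ) < Real.sqrt ((n:ℝ)+1) := Real.sqrt_pos.2 (by positivity)
    have h3 : ∑ m ∈ Finset.range (n+1), 1/(Real.sqrt (n+1) * Real.sqrt (m+1))
        = (1/Real.sqrt (n+1)) * ∑ m ∈ Finset.range (n+1), 1/Real.sqrt (m+1) := by
      rw [Finset.mul_sum]
      exact Finset.sum_congr rfl (fun m _ => by rw [one_div_mul_eq_div, div_div]; ring_nf)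
    have h4 := sum_inv_sqrt_le (n+1)
    have hsq : Real.sqrt ((n:ℝ)+1) = Real.sqrt ((n+1 : ℕ)) := by push_cast; ring_nf
    calc ∑ m ∈ F.filter (· ≤ n), 1/(Real.sqrt (n+1) * Real.sqrt (m+1))
        ≤ (1/Real.sqrt (n+1)) * ∑ m ∈ Finset.range (n+1), 1/Real.sqrt (m+1) := by
          rw [← h3]; exact h2
      _ ≤ (1/Real.sqrt (n+1)) * (2 * Real.sqrt (n+1)) := by
          apply mul_le_mul_of_nonneg_left _ (by positivity)
          rw [hsq]; exact h4
      _ = 2 := by field_simp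
  have hqs : ∑ m ∈ F, q m ≤ 2 := by
    have h1 : ∑ m ∈ F, q m = ∑ m ∈ F.filter (n < ·), Real.sqrt (n+1) / (((m:ℝ)+1) * Real.sqrt (m+1)) := by
      rw [Finset.sum_filter]
    rw [h1]
    have hsub : F.filter (n < ·) ⊆ Finset.Ico (n+1) N := by
      intro m hm
      simp only [Finset.mem_filter] at hm
      have := hFN hm.1
      simp only [Finset.mem_range] at this
      exact Finset.mem_Ico.2 ⟨by omega, this⟩
    have h2 : ∑ m ∈ F.filter (n < ·), Real.sqrt (n+1) / (((m:ℝ)+1) * Real.sqrt (m+1))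
        ≤ ∑ m ∈ Finset.Ico (n+1) N, Real.sqrt (n+1) / (((m:ℝ)+1) * Real.sqrt (m+1)) :=
      Finset.sum_le_sum_of_subset_of_nonneg hsub (fun m _ _ => by positivity)
    have h3 : ∑ m ∈ Finset.Ico (n+1) N, Real.sqrt (n+1) / (((m:ℝ)+1) * Real.sqrt (m+1))
        = Real.sqrt (n+1) * ∑ m ∈ Finset.Ico (n+1) N, 1 / (((m:ℝ)+1) * Real.sqrt (m+1)) := by
      rw [Finset.mul_sum]
      exact Finset.sum_congr rfl (fun m _ => by ring)
    have h4 := sum_pow32_le (n+1) N (by omega)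
    have hsn0 : (0:ℝ) < Real.sqrt ((n:ℝ)+1) := Real.sqrt_pos.2 (by positivity)
    have hsq : Real.sqrt ((n:ℝ)+1) = Real.sqrt ((n+1 : ℕ)) := by push_cast; ring_nf
    calc ∑ m ∈ F.filter (n < ·), Real.sqrt (n+1) / (((m:ℝ)+1) * Real.sqrt (m+1))
        ≤ Real.sqrt (n+1) * ∑ m ∈ Finset.Ico (n+1) N, 1 / (((m:ℝ)+1) * Real.sqrt (m+1)) := by
          rw [← h3]; exact h2
      _ ≤ Real.sqrt (n+1) * (2 / Real.sqrt (n+1)) := by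
          apply mul_le_mul_of_nonneg_left _ (by positivity)
          rw [hsq]; exact h4
      _ = 2 := by
          rw [hsq] at hsn0 ⊢
          field_simp
  calc ∑ m ∈ F, r m ≤ ∑ m ∈ F, (p m + q m) := Finset.sum_le_sum (fun m _ => hbound m)
    _ = ∑ m ∈ F, p m + ∑ m ∈ F, q m := Finset.sum_add_distrib
    _ ≤ 4 := by linarith

/-- Hilbert-type inequality: for nonnegative `a`,
`∑_{n,m∈F} a n * a m / (n+m+1) ≤ 4 * ∑_{n∈F} (a n)^2`. -/
lemma hilbert_ineq (F : Finset ℕ) (a : ℕ → ℝ) (ha : ∀ n, 0 ≤ a n) :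
    ∑ n ∈ F, ∑ m ∈ F, a n * a m / ((n:ℝ)+(m:ℝ)+1) ≤ 4 * ∑ n ∈ F, a n ^ 2 := by
  set r : ℕ → ℕ → ℝ := fun n m => Real.sqrt (n+1) / (Real.sqrt (m+1) * ((n:ℝ)+(m:ℝ)+1)) with hrdef
  have hpt : ∀ n m : ℕ, a n * a m / ((n:ℝ)+(m:ℝ)+1)
      ≤ (a n ^ 2 * r n m + a m ^ 2 * r m n) / 2 := by
    intro n m
    have hsn : Real.sqrt ((n:ℝ)+1) ^ 2 = (n:ℝ)+1 := Real.sq_sqrt (by positivity)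
    have hsm : Real.sqrt ((m:ℝ)+1) ^ 2 = (m:ℝ)+1 := Real.sq_sqrt (by positivity)
    have hsn0 : (0:ℝ) < Real.sqrt ((n:ℝ)+1) := Real.sqrt_pos.2 (by positivity)
    have hsm0 : (0:ℝ) < Real.sqrt ((m:ℝ)+1) := Real.sqrt_pos.2 (by positivity)
    have hd : (0:ℝ) < (n:ℝ)+(m:ℝ)+1 := by positivity
    rw [hrdef]
    simp only
    set s := Real.sqrt ((n:ℝ)+1) with hs
    set t := Real.sqrt ((m:ℝ)+1) with ht
    set D := (n:ℝ)+(m:ℝ)+1 with hD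
    have e1 : (m:ℝ)+(n:ℝ)+1 = D := by rw [hD]; ring
    rw [e1]
    have key : 2 * (a n * a m) * (s*t) ≤ a n ^ 2 * s^2 + a m ^ 2 * t^2 := by
      nlinarith [sq_nonneg (a n * s - a m * t)]
    have hs0 : s ≠ 0 := ne_of_gt hsn0
    have ht0 : t ≠ 0 := ne_of_gt hsm0
    have hD0 : D ≠ 0 := ne_of_gt hd
    calc a n * a m / D = (2*(a n*a m)*(s*t)) * (1/(s*t*D)) / 2 := by
          field_simp
        _ ≤ (a n^2*s^2 + a m^2*t^2) * (1/(s*t*D)) / 2 := by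
          gcongr
        _ = (a n ^ 2 * (s / (t * D)) + a m ^ 2 * (t / (s * D))) / 2 := by
          field_simp
  calc ∑ n ∈ F, ∑ m ∈ F, a n * a m / ((n:ℝ)+(m:ℝ)+1)
      ≤ ∑ n ∈ F, ∑ m ∈ F, (a n ^ 2 * r n m + a m ^ 2 * r m n) / 2 :=
        Finset.sum_le_sum (fun n _ => Finset.sum_le_sum (fun m _ => hpt n m))
    _ = ∑ n ∈ F, ∑ m ∈ F, a n ^ 2 * r n m := by
        have hswap : ∑ n ∈ F, ∑ m ∈ F, a m ^ 2 * r m n = ∑ n ∈ F, ∑ m ∈ F, a n ^ 2 * r n m :=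
          Finset.sum_comm
        simp only [add_div, Finset.sum_add_distrib, ← Finset.sum_div, hswap]
        ring
    _ ≤ ∑ n ∈ F, a n ^ 2 * 4 := by
        apply Finset.sum_le_sum
        intro n _
        rw [← Finset.mul_sum]
        exact mul_le_mul_of_nonneg_left (row_sum_le n F) (sq_nonneg _)
    _ = 4 * ∑ n ∈ F, a n ^ 2 := by rw [← Finset.sum_mul]; ring

end HilbertIneq

section Aux
variable {H : Type*} [NormedAddCommGroup H] [InnerProductSpace ℂ H] [CompleteSpace H]

lemma inner_pow_pow (A : H →L[ℂ] H) (hA : IsSelfAdjoint A) (x : H) (n m : ℕ) :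
    (inner ℂ ((A ^ n) x) ((A ^ m) x) : ℂ) = inner ℂ ((A ^ (n + m)) x) x := by
  have h := (hA.pow m).isSymmetric ((A ^ n) x) x
  simp only [ContinuousLinearMap.coe_coe] at h
  rw [← h, ← ContinuousLinearMap.mul_apply, ← pow_add, add_comm m n]

lemma norm_inner_pow_self (A : H →L[ℂ] H) (hA : IsSelfAdjoint A) (x : H) (j : ℕ) :
    ‖(inner ℂ ((A ^ (2 * j)) x) x : ℂ)‖ = ‖(A ^ j) x‖ ^ 2 := by
  rw [show 2 * j = j + j by ring, ← inner_pow_pow A hA x j j,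
    inner_self_eq_norm_sq_to_K]
  rw [norm_pow, RCLike.norm_ofReal, abs_norm]

variable (A : H →L[ℂ] H) (hA : IsSelfAdjoint A) (x : H) (C : ℝ) (hC : 0 < C)
  (hB : ∀ v : H, ∀ F : Finset ℕ, ∑ j ∈ F, ‖(inner ℂ v ((A ^ j) x) : ℂ)‖ ^ 2 ≤ C * ‖v‖ ^ 2)

include hA hC hB

/-- The squared norms are bounded by the Bessel bound. -/
lemma sq_norm_le : ∀ k : ℕ, ‖(A ^ k) x‖ ^ 2 ≤ C := by
  intro k
  have h := hB ((A ^ k) x) {k}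
  rw [Finset.sum_singleton, inner_self_eq_norm_sq_to_K, norm_pow, RCLike.norm_ofReal,
    abs_norm] at h
  rcases eq_or_lt_of_le (norm_nonneg ((A ^ k) x)) with h0 | h0
  · rw [← h0]; simpa using hC.le
  · nlinarith

omit hC hB

/-- Log-convexity of the squared norms. -/
lemma sq_norm_logconvex (k : ℕ) :
    (‖(A ^ (k+1)) x‖ ^ 2) ^ 2 ≤ ‖(A ^ (k+2)) x‖ ^ 2 * ‖(A ^ k) x‖ ^ 2 := by
  have h1 : ‖(A ^ (k+1)) x‖ ^ 2 = ‖(inner ℂ ((A ^ (k+2)) x) ((A ^ k) x) : ℂ)‖ := by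
    rw [inner_pow_pow A hA x, show k+2+k = 2*(k+1) by ring, norm_inner_pow_self A hA x]
  have h2 : ‖(inner ℂ ((A ^ (k+2)) x) ((A ^ k) x) : ℂ)‖ ≤ ‖(A ^ (k+2)) x‖ * ‖(A ^ k) x‖ :=
    norm_inner_le_norm _ _
  rw [h1]
  nlinarith [norm_nonneg ((A ^ (k+2)) x), norm_nonneg ((A ^ k) x), norm_nonneg ((A^(k+1)) x),
    norm_nonneg ((inner ℂ ((A ^ (k+2)) x) ((A ^ k) x) : ℂ))]

include hC hB

/-- The squared norms are nonincreasing. -/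
lemma sq_norm_anti : ∀ k : ℕ, ‖(A ^ (k+1)) x‖ ^ 2 ≤ ‖(A ^ k) x‖ ^ 2 := by
  intro k
  by_contra hcon
  push_neg at hcon
  set a : ℕ → ℝ := fun k => ‖(A ^ k) x‖ ^ 2 with ha
  have hcon' : a k < a (k+1) := hcon
  have hnn : ∀ n, 0 ≤ a n := fun n => by positivity
  have hlc : ∀ n, (a (n+1)) ^ 2 ≤ a (n+2) * a n := fun n => sq_norm_logconvex A hA x n
  have hle : ∀ n, a n ≤ C := fun n => sq_norm_le A hA x C hC hB n
  have hak : 0 < a k := by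
    rcases eq_or_lt_of_le (hnn k) with h0 | h0
    · exfalso
      have := hlc k
      rw [← h0] at this
      nlinarith [hnn (k+2), hcon']
    · exact h0
  set r : ℝ := a (k+1) / a k with hrdef
  have hr : 1 < r := (one_lt_div hak).2 hcon'
  have Q : ∀ n, 0 < a (k+n) ∧ r * a (k+n) ≤ a (k+n+1) := by
    intro n
    induction n with
    | zero =>
      refine ⟨hak, ?_⟩
      simp only [Nat.add_zero]
      rw [hrdef, div_mul_cancel₀ _ (ne_of_gt hak)]
    | succ n ih =>
      obtain ⟨h0, h1⟩ := ih
      have h2 : 0 < a (k+n+1) := lt_of_lt_of_le (by positivity) h1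
      have h3 := hlc (k+n)
      refine ⟨by rw [show k+(n+1) = k+n+1 by ring]; exact h2, ?_⟩
      rw [show k+(n+1) = k+n+1 by ring, show k+n+1+1 = k+n+2 by ring]
      nlinarith
  have R : ∀ n, a k * r ^ n ≤ a (k+n) := by
    intro n
    induction n with
    | zero => simp
    | succ n ih =>
      have := (Q n).2
      calc a k * r ^ (n+1) = (a k * r ^ n) * r := by ring
        _ ≤ a (k+n) * r := by
            apply mul_le_mul_of_nonneg_right ih (by linarith)
        _ = r * a (k+n) := by ring
        _ ≤ a (k+n+1) := (Q n).2
  obtain ⟨n, hn⟩ := pow_unbounded_of_one_lt (C / a k) hr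
  have h1 := R n
  have h2 := hle (k+n)
  have h3 : C < a k * r ^ n := by
    rw [div_lt_iff₀ hak] at hn
    nlinarith
  linarith

/-- Monotone version. -/
lemma sq_norm_mono : ∀ j k : ℕ, j ≤ k → ‖(A ^ k) x‖ ^ 2 ≤ ‖(A ^ j) x‖ ^ 2 := by
  have key : ∀ d j : ℕ, ‖(A ^ (j + d)) x‖ ^ 2 ≤ ‖(A ^ j) x‖ ^ 2 := by
    intro d
    induction d with
    | zero => simp
    | succ d ih =>
      intro j
      calc ‖(A ^ (j + (d+1))) x‖ ^ 2 = ‖(A ^ ((j+d)+1)) x‖ ^ 2 := by rw [show j+(d+1) = (j+d)+1 by ring]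
        _ ≤ ‖(A ^ (j + d)) x‖ ^ 2 := sq_norm_anti A hA x C hC hB (j+d)
        _ ≤ ‖(A ^ j) x‖ ^ 2 := ih j
  intro j k hjk
  have := key (k - j) j
  rwa [Nat.add_sub_cancel' hjk] at this

/-- Key decay bound for even moments. -/
lemma sq_norm_decay : ∀ k : ℕ, 1 ≤ k → (k : ℝ) * ‖(A ^ k) x‖ ^ 2 ≤ 2 * C := by
  intro k hk
  have hinj : ∀ a ∈ Finset.range (k/2+1), ∀ b ∈ Finset.range (k/2+1),
      2*a + k % 2 = 2*b + k % 2 → a = b := by intro a _ b _ h; omega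
  have h := hB ((A ^ k) x) (Finset.image (fun i => 2*i + k % 2) (Finset.range (k/2 + 1)))
  rw [Finset.sum_image hinj] at h
  have hterm : ∀ i ∈ Finset.range (k/2+1),
      (‖(A ^ k) x‖ ^ 2) ^ 2 ≤ ‖(inner ℂ ((A ^ k) x) ((A ^ (2*i + k % 2)) x) : ℂ)‖ ^ 2 := by
    intro i hi
    rw [Finset.mem_range] at hi
    set j := (k + k % 2)/2 + i with hj
    have hkey : k + (2*i + k % 2) = 2 * j := by omega
    have hjk : j ≤ k := by omega
    rw [inner_pow_pow A hA x, hkey, norm_inner_pow_self A hA x]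
    have := sq_norm_mono A hA x C hC hB j k hjk
    nlinarith [norm_nonneg ((A ^ k) x), norm_nonneg ((A ^ j) x)]
  have hsum : (↑(k/2+1) : ℝ) * (‖(A ^ k) x‖ ^ 2) ^ 2 ≤ C * ‖(A ^ k) x‖ ^ 2 := by
    calc (↑(k/2+1) : ℝ) * (‖(A ^ k) x‖ ^ 2) ^ 2
        = ∑ _i ∈ Finset.range (k/2+1), (‖(A ^ k) x‖ ^ 2) ^ 2 := by
          rw [Finset.sum_const, Finset.card_range, nsmul_eq_mul]
      _ ≤ ∑ i ∈ Finset.range (k/2+1), ‖(inner ℂ ((A ^ k) x) ((A ^ (2*i + k % 2)) x) : ℂ)‖ ^ 2 :=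
          Finset.sum_le_sum hterm
      _ ≤ C * ‖(A ^ k) x‖ ^ 2 := h
  have hcast : (k : ℝ) ≤ 2 * (↑(k/2+1) : ℝ) := by
    have : k ≤ 2 * (k/2+1) := by omega
    exact_mod_cast this
  rcases eq_or_lt_of_le (norm_nonneg ((A ^ k) x)) with h0 | h0
  · rw [← h0]; simp; positivity
  · have hs : (0:ℝ) < ‖(A ^ k) x‖ ^ 2 := by positivity
    have h5 : (↑(k/2+1):ℝ) * ‖(A ^ k) x‖ ^ 2 ≤ C :=
      le_of_mul_le_mul_right (by nlinarith [hsum]) hs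
    nlinarith [h5, hcast, hs.le]

/-- Forward direction conclusion. -/
lemma forward_bound : ∀ k : ℕ, 1 ≤ k → ‖(inner ℂ ((A ^ k) x) x : ℂ)‖ ≤ 6 * C / k := by
  intro k hk
  have hkpos : (0:ℝ) < k := by exact_mod_cast hk
  rcases Nat.even_or_odd k with ⟨j, hj⟩ | ⟨j, hj⟩
  · -- even : k = j + j
    have hj1 : 1 ≤ j := by omega
    have hjpos : (0:ℝ) < j := by exact_mod_cast hj1
    rw [show k = 2 * j by omega, norm_inner_pow_self A hA x]
    have := sq_norm_decay A hA x C hC hB j hj1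
    have hpos : (0:ℝ) < ((2*j:ℕ):ℝ) := by exact_mod_cast (by omega : 0 < 2*j)
    rw [le_div_iff₀ hpos]
    rw [Nat.cast_mul, Nat.cast_two]
    nlinarith [sq_nonneg (‖(A ^ j) x‖), norm_nonneg ((A ^ j) x)]
  · -- odd: k = 2j+1
    have hsplit : ‖(inner ℂ ((A ^ k) x) x : ℂ)‖ ≤ ‖(A ^ (j+1)) x‖ * ‖(A ^ j) x‖ := by
      rw [show k = (j+1) + j by omega, ← inner_pow_pow A hA x (j+1) j]
      exact norm_inner_le_norm _ _
    rcases Nat.eq_zero_or_pos j with h0 | h1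
    · subst h0
      have c1 := sq_norm_le A hA x C hC hB 1
      have c0 := sq_norm_le A hA x C hC hB 0
      have : ‖(A ^ 1) x‖ * ‖(A ^ 0) x‖ ≤ C := by
        nlinarith [norm_nonneg ((A ^ 1) x), norm_nonneg ((A ^ 0) x)]
      have hk1 : k = 1 := by omega
      subst hk1
      rw [Nat.cast_one]
      rw [div_one]
      linarith [hsplit]
    · have hj1 : (1:ℝ) ≤ (j:ℝ) := by exact_mod_cast h1
      have hmono := sq_norm_anti A hA x C hC hB j
      have hbb : ‖(A ^ (j+1)) x‖ ≤ ‖(A ^ j) x‖ := by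
        nlinarith [norm_nonneg ((A ^ (j+1)) x), norm_nonneg ((A ^ j) x)]
      have hdecay := sq_norm_decay A hA x C hC hB j h1
      have h2 : ‖(inner ℂ ((A ^ k) x) x : ℂ)‖ ≤ ‖(A ^ j) x‖ ^ 2 := by
        calc ‖(inner ℂ ((A ^ k) x) x : ℂ)‖ ≤ ‖(A ^ (j+1)) x‖ * ‖(A ^ j) x‖ := hsplit
          _ ≤ ‖(A ^ j) x‖ * ‖(A ^ j) x‖ := by
              apply mul_le_mul_of_nonneg_right hbb (norm_nonneg _)
          _ = ‖(A ^ j) x‖ ^ 2 := by ring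
      rw [le_div_iff₀ hkpos]
      have hkj : (k:ℝ) = 2*(j:ℝ)+1 := by rw [hj]; push_cast; ring
      have hEq : ‖(A ^ j) x‖^2 * (k:ℝ) = 2*((j:ℝ) * ‖(A ^ j) x‖^2) + ‖(A ^ j) x‖^2 := by
        rw [hkj]; ring
      have hA2 : ‖(inner ℂ ((A ^ k) x) x : ℂ)‖ * (k:ℝ) ≤ ‖(A ^ j) x‖^2 * (k:ℝ) :=
        mul_le_mul_of_nonneg_right h2 hkpos.le
      have hA3 : (0:ℝ) ≤ ((j:ℝ)-1) * ‖(A ^ j) x‖^2 :=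
        mul_nonneg (by linarith) (sq_nonneg _)
      nlinarith [hdecay, hA2, hA3, hEq]
  end Aux

section Backward
variable {H : Type*} [NormedAddCommGroup H] [InnerProductSpace ℂ H] [CompleteSpace H]

lemma backward_bessel (A : H →L[ℂ] H) (hA : IsSelfAdjoint A) (x : H) (C : ℝ) (hC : 0 < C)
    (hm : ∀ k : ℕ, 1 ≤ k → ‖(inner ℂ ((A ^ k) x) x : ℂ)‖ ≤ C / k) (v : H) (F : Finset ℕ) :
    ∑ j ∈ F, ‖(inner ℂ v ((A ^ j) x) : ℂ)‖ ^ 2 ≤ (‖x‖^2 + 8*C) * ‖v‖ ^ 2 := by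
  set c : ℕ → ℂ := fun n => inner ℂ v ((A ^ n) x) with hc
  set S : ℝ := ∑ j ∈ F, ‖c j‖ ^ 2 with hSdef
  show S ≤ (‖x‖^2 + 8*C) * ‖v‖ ^ 2
  have hSnn : 0 ≤ S := Finset.sum_nonneg fun j _ => by positivity
  rcases eq_or_lt_of_le hSnn with h0 | hSpos
  · rw [← h0]; positivity
  set w : H := ∑ n ∈ F, (starRingEnd ℂ) (c n) • (A ^ n) x with hw
  have hvw : (inner ℂ v w : ℂ) = ((S : ℝ) : ℂ) := by
    rw [hw, inner_sum, hSdef]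
    simp only [Complex.ofReal_sum, Complex.ofReal_pow]
    refine Finset.sum_congr rfl fun n _ => ?_
    rw [inner_smul_right, RCLike.conj_mul]
    norm_cast
  have hS_le : S ≤ ‖v‖ * ‖w‖ := by
    have h1 : ‖(inner ℂ v w : ℂ)‖ = S := by
      rw [hvw, Complex.norm_real]; exact Real.norm_of_nonneg hSnn
    rw [← h1]; exact norm_inner_le_norm v w
  have hG : ∀ n m : ℕ, ‖(inner ℂ ((A ^ n) x) ((A ^ m) x) : ℂ)‖
      ≤ (if n = 0 then (1:ℝ) else 0) * (if m = 0 then (1:ℝ) else 0) * ‖x‖^2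
        + 2*C / ((n:ℝ)+(m:ℝ)+1) := by
    intro n m
    rcases Nat.eq_zero_or_pos (n+m) with h | h
    · have hn0 : n = 0 := by omega
      have hm0 : m = 0 := by omega
      subst hn0; subst hm0
      simp only [pow_zero, ContinuousLinearMap.one_apply, Nat.cast_zero]
      rw [inner_self_eq_norm_sq_to_K, norm_pow, RCLike.norm_ofReal, abs_norm]
      norm_num
      nlinarith [sq_nonneg ‖x‖]
    · rw [inner_pow_pow A hA x]
      have h1 := hm (n+m) h
      have hpos : (0:ℝ) < (n:ℝ)+(m:ℝ) := by
        have h4 : (0:ℝ) < ((n+m:ℕ):ℝ) := by exact_mod_cast h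
        push_cast at h4; linarith
      have h5 : (1:ℝ) ≤ (n:ℝ)+(m:ℝ) := by
        have : (1:ℝ) ≤ ((n+m:ℕ):ℝ) := by exact_mod_cast h
        push_cast at this; linarith
      have hcast : ((n+m : ℕ):ℝ) = (n:ℝ)+(m:ℝ) := by push_cast; ring
      rw [hcast] at h1
      have h2 : C/((n:ℝ)+(m:ℝ)) ≤ 2*C/((n:ℝ)+(m:ℝ)+1) := by
        rw [div_le_div_iff₀ hpos (by linarith)]
        nlinarith
      have h3 : 0 ≤ (if n = 0 then (1:ℝ) else 0) * (if m = 0 then (1:ℝ) else 0) * ‖x‖^2 := by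
        positivity
      linarith
  have hww : (inner ℂ w w : ℂ)
      = ∑ n ∈ F, ∑ m ∈ F, c n * (starRingEnd ℂ) (c m) * inner ℂ ((A^n) x) ((A^m) x) := by
    rw [hw, sum_inner]
    refine Finset.sum_congr rfl fun n _ => ?_
    rw [inner_smul_left, inner_sum, Finset.mul_sum]
    refine Finset.sum_congr rfl fun m _ => ?_
    rw [inner_smul_right, RingHomCompTriple.comp_apply]
    simp only [RingHom.id_apply]
    ring
  have hwnorm : ‖w‖^2 = ‖(inner ℂ w w : ℂ)‖ := by
    rw [inner_self_eq_norm_sq_to_K, norm_pow, RCLike.norm_ofReal, abs_norm]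
  have hite : ∑ n ∈ F, ∑ m ∈ F,
      ‖c n‖*‖c m‖*((if n=0 then (1:ℝ) else 0)*(if m=0 then (1:ℝ) else 0)*‖x‖^2)
        ≤ ‖x‖^2 * S := by
    have e : ∀ n m : ℕ, ‖c n‖*‖c m‖*((if n=0 then (1:ℝ) else 0)*(if m=0 then (1:ℝ) else 0)*‖x‖^2)
        = ‖x‖^2 * ((if n=0 then ‖c n‖ else 0) * (if m=0 then ‖c m‖ else 0)) := by
      intro n m
      by_cases hn : n = 0 <;> by_cases hm2 : m = 0 <;> simp [hn, hm2] <;> ring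
    have hT : (∑ n ∈ F, if n=0 then ‖c n‖ else 0) = if 0 ∈ F then ‖c 0‖ else 0 :=
      Finset.sum_ite_eq' F 0 (fun n => ‖c n‖)
    have hT2 : (∑ n ∈ F, if n=0 then ‖c n‖ else 0) * (∑ m ∈ F, if m=0 then ‖c m‖ else 0) ≤ S := by
      rw [hT]
      split_ifs with h0F
      · have : ‖c 0‖^2 ≤ S := by
          rw [hSdef]
          exact Finset.single_le_sum (f := fun j => ‖c j‖^2) (fun j _ => by positivity) h0F
        nlinarith
      · simp [hSnn]
    have e2 : ∑ n ∈ F, ∑ m ∈ F,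
        ‖c n‖*‖c m‖*((if n=0 then (1:ℝ) else 0)*(if m=0 then (1:ℝ) else 0)*‖x‖^2)
        = ‖x‖^2 * ((∑ n ∈ F, if n=0 then ‖c n‖ else 0) * (∑ m ∈ F, if m=0 then ‖c m‖ else 0)) := by
      rw [Finset.sum_mul_sum, Finset.mul_sum]
      refine Finset.sum_congr rfl fun n _ => ?_
      rw [Finset.mul_sum]
      exact Finset.sum_congr rfl fun m _ => e n m
    rw [e2]
    exact mul_le_mul_of_nonneg_left hT2 (by positivity)
  have hw_le : ‖w‖^2 ≤ (‖x‖^2 + 8*C) * S := by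
    rw [hwnorm, hww]
    have step1 : ‖∑ n ∈ F, ∑ m ∈ F, c n * (starRingEnd ℂ) (c m) * inner ℂ ((A^n) x) ((A^m) x)‖
        ≤ ∑ n ∈ F, ∑ m ∈ F, ‖c n‖*‖c m‖*‖(inner ℂ ((A^n) x) ((A^m) x) : ℂ)‖ := by
      refine le_trans (norm_sum_le _ _) (Finset.sum_le_sum fun n _ => ?_)
      refine le_trans (norm_sum_le _ _) (Finset.sum_le_sum fun m _ => ?_)
      rw [norm_mul, norm_mul, RCLike.norm_conj]
    have step2 : ∑ n ∈ F, ∑ m ∈ F, ‖c n‖*‖c m‖*‖(inner ℂ ((A^n) x) ((A^m) x) : ℂ)‖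
        ≤ ∑ n ∈ F, ∑ m ∈ F,
          (‖c n‖*‖c m‖*((if n=0 then (1:ℝ) else 0)*(if m=0 then (1:ℝ) else 0)*‖x‖^2)
            + 2*C*(‖c n‖*‖c m‖/((n:ℝ)+(m:ℝ)+1))) := by
      refine Finset.sum_le_sum fun n _ => Finset.sum_le_sum fun m _ => ?_
      calc ‖c n‖*‖c m‖*‖(inner ℂ ((A^n) x) ((A^m) x) : ℂ)‖
          ≤ ‖c n‖*‖c m‖*((if n=0 then (1:ℝ) else 0)*(if m=0 then (1:ℝ) else 0)*‖x‖^2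
              + 2*C / ((n:ℝ)+(m:ℝ)+1)) := by
            apply mul_le_mul_of_nonneg_left (hG n m) (by positivity)
        _ = ‖c n‖*‖c m‖*((if n=0 then (1:ℝ) else 0)*(if m=0 then (1:ℝ) else 0)*‖x‖^2)
            + 2*C*(‖c n‖*‖c m‖/((n:ℝ)+(m:ℝ)+1)) := by ring
    have step3 : ∑ n ∈ F, ∑ m ∈ F,
          (‖c n‖*‖c m‖*((if n=0 then (1:ℝ) else 0)*(if m=0 then (1:ℝ) else 0)*‖x‖^2)
            + 2*C*(‖c n‖*‖c m‖/((n:ℝ)+(m:ℝ)+1)))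
        = (∑ n ∈ F, ∑ m ∈ F,
            ‖c n‖*‖c m‖*((if n=0 then (1:ℝ) else 0)*(if m=0 then (1:ℝ) else 0)*‖x‖^2))
          + 2*C * ∑ n ∈ F, ∑ m ∈ F, ‖c n‖*‖c m‖/((n:ℝ)+(m:ℝ)+1) := by
      rw [Finset.mul_sum, ← Finset.sum_add_distrib]
      refine Finset.sum_congr rfl fun n _ => ?_
      rw [Finset.mul_sum, ← Finset.sum_add_distrib]
    have step4 : ∑ n ∈ F, ∑ m ∈ F, ‖c n‖*‖c m‖/((n:ℝ)+(m:ℝ)+1) ≤ 4 * S := by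
      have := hilbert_ineq F (fun n => ‖c n‖) (fun n => norm_nonneg _)
      simpa [hSdef] using this
    refine le_trans step1 (le_trans step2 ?_)
    rw [step3]
    have h2C : (0:ℝ) ≤ 2*C := by linarith
    have h8 := mul_le_mul_of_nonneg_left step4 h2C
    nlinarith [hite, h8]
  have hfin : S * S ≤ ((‖x‖^2 + 8*C) * ‖v‖^2) * S := by
    nlinarith [hS_le, hw_le, norm_nonneg v, norm_nonneg w, hSnn]
  exact le_of_mul_le_mul_right hfin hSpos

end Backward

/-- `y` is a Bessel sequence with Bessel bound `C`:
`∑_j |⟨v, y_j⟩|² ≤ C‖v‖²` for all `v` (stated via finite partial sums). -/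
def IsBesselSequenceWith {H : Type*} [NormedAddCommGroup H] [InnerProductSpace ℂ H]
    {ι : Type*} (y : ι → H) (C : ℝ) : Prop :=
  ∀ v : H, ∀ F : Finset ι, ∑ j ∈ F, ‖(inner ℂ v (y j) : ℂ)‖ ^ 2 ≤ C * ‖v‖ ^ 2

theorem stmt_7 {H : Type*} [NormedAddCommGroup H] [InnerProductSpace ℂ H] [CompleteSpace H]
    (A : H →L[ℂ] H) (hA : IsSelfAdjoint A) (x : H) :
    (∃ C > 0, IsBesselSequenceWith (fun k : ℕ => (A ^ k) x) C) ↔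
      (∃ C > 0, ∀ k : ℕ, 1 ≤ k → ‖(inner ℂ ((A ^ k) x) x : ℂ)‖ ≤ C / k) := by
  constructor
  · rintro ⟨C, hC, hB⟩
    exact ⟨6*C, by linarith, forward_bound A hA x C hC hB⟩
  · rintro ⟨C, hC, hm⟩
    refine ⟨‖x‖^2 + 8*C, by positivity, ?_⟩
    intro v F
    exact backward_bessel A hA x C hC hm v F
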